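/- Let k ≥ 1 and let G be a bipartite graph of order n ≥ 2k+2 containing no cycle on 2k+2 vertices. Then the adjacency spectral radius satisfies ρ(G) ≤ √(k(n−k)), and equality holds if and only if G is isomorphic to the complete bipartite graph K_{k,n−k}. -/

import Mathlib

open SimpleGraph Finset

open Classical in
/-- The adjacency matrix of `G` over `ℝ`. -/
noncomputable def adjMat {V : Type*} [Fintype V] (G : SimpleGraph V) : Matrix V V ℝ :=
  Matrix.of fun v w => if G.Adj v w then 1 else 0

/-- `μ` is an eigenvalue of the adjacency matrix of `G`. -/
def IsAdjEigenvalue {V : Type*} [Fintype V] (G : SimpleGraph V) (μ : ℝ) : Prop :=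
  ∃ x : V → ℝ, x ≠ 0 ∧ (adjMat G).mulVec x = μ • x

/-- `ρ(G)`: the spectral radius of the adjacency matrix of `G`, i.e. the largest absolute
value of an eigenvalue. -/
noncomputable def specRad {V : Type*} [Fintype V] (G : SimpleGraph V) : ℝ :=
  sSup {r : ℝ | ∃ μ : ℝ, IsAdjEigenvalue G μ ∧ r = |μ|}

/-- A graph is bipartite if its vertices can be two-colored so that every edge joins the two
color classes. -/
def IsBipartite {V : Type*} (G : SimpleGraph V) : Prop :=
  ∃ s : Set V, ∀ ⦃v w : V⦄, G.Adj v w → (v ∈ s ↔ w ∉ s)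

/-- `G` contains a cycle on `t` vertices. -/
def HasCycleOn {V : Type*} (G : SimpleGraph V) (t : ℕ) : Prop :=
  ∃ (a : V) (p : G.Walk a a), p.IsCycle ∧ p.length = t


set_option linter.unusedSectionVars false

section Aux

variable {V : Type*} [DecidableEq V]

/-- An alternating path `v 0, w 0, v 1, w 1, ..., w (k-1), v k` with the `v`'s in `A`,
the `w`'s in `B`, each `w j` adjacent to `v j` and `v (j+1)`. -/
def APath (adj : V → V → Prop) (A B : Finset V) (k : ℕ) : Prop :=
  ∃ v w : ℕ → V,
    (∀ i, i ≤ k → v i ∈ A) ∧ (∀ j, j < k → w j ∈ B) ∧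
    (∀ i, i ≤ k → ∀ j, j ≤ k → v i = v j → i = j) ∧
    (∀ i, i < k → ∀ j, j < k → w i = w j → i = j) ∧
    (∀ j, j < k → adj (v j) (w j) ∧ adj (v (j+1)) (w j))

lemma APath.mono {adj : V → V → Prop} {A A' B B' : Finset V} {k : ℕ}
    (h : APath adj A' B' k) (hA : A' ⊆ A) (hB : B' ⊆ B) : APath adj A B k := by
  obtain ⟨v, w, h1, h2, h3, h4, h5⟩ := h
  exact ⟨v, w, fun i hi => hA (h1 i hi), fun j hj => hB (h2 j hj), h3, h4, h5⟩

lemma exists_apath (adj : V → V → Prop) [DecidableRel adj] {A B : Finset V} {k : ℕ}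
    (hA : A.Nonempty)
    (hdA : ∀ x ∈ A, k ≤ (B.filter (fun y => adj x y)).card)
    (hdB : ∀ y ∈ B, k + 1 ≤ (A.filter (fun x => adj x y)).card) :
    APath adj A B k := by
  suffices h : ∀ i, i ≤ k → ∃ v w : ℕ → V,
      (∀ m, m ≤ i → v m ∈ A) ∧ (∀ j, j < i → w j ∈ B) ∧
      (∀ m, m ≤ i → ∀ j, j ≤ i → v m = v j → m = j) ∧
      (∀ m, m < i → ∀ j, j < i → w m = w j → m = j) ∧
      (∀ j, j < i → adj (v j) (w j) ∧ adj (v (j+1)) (w j)) by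
    obtain ⟨v, w, h1, h2, h3, h4, h5⟩ := h k le_rfl
    exact ⟨v, w, h1, h2, h3, h4, h5⟩
  intro i hi
  induction i with
  | zero =>
      obtain ⟨x, hx⟩ := hA
      exact ⟨fun _ => x, fun _ => x, fun m _ => hx, fun j hj => absurd hj (by omega),
        fun m hm j hj _ => by omega, fun m hm => absurd hm (by omega),
        fun j hj => absurd hj (by omega)⟩
  | succ i ih =>
      obtain ⟨v, w, h1, h2, h3, h4, h5⟩ := ih (by omega)
      -- pick a fresh neighbour `wi ∈ B` of `v i`
      have hw : ((B.filter (fun y => adj (v i) y)) \ ((Finset.range i).image w)).Nonempty := by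
        rw [← Finset.card_pos]
        have hc1 : k ≤ (B.filter (fun y => adj (v i) y)).card := hdA _ (h1 i le_rfl)
        have hc2 : ((Finset.range i).image w).card ≤ i :=
          le_trans Finset.card_image_le (by simp)
        have := Finset.le_card_sdiff ((Finset.range i).image w) (B.filter (fun y => adj (v i) y))
        omega
      obtain ⟨wi, hwi⟩ := hw
      rw [Finset.mem_sdiff, Finset.mem_filter] at hwi
      obtain ⟨⟨hwiB, hwiadj⟩, hwifresh⟩ := hwi
      -- pick a fresh neighbour `vi ∈ A` of `wi`
      have hv : ((A.filter (fun x => adj x wi)) \ ((Finset.range (i+1)).image v)).Nonempty := by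
        rw [← Finset.card_pos]
        have hc1 : k + 1 ≤ (A.filter (fun x => adj x wi)).card := hdB _ hwiB
        have hc2 : ((Finset.range (i+1)).image v).card ≤ i + 1 :=
          le_trans Finset.card_image_le (by simp)
        have := Finset.le_card_sdiff ((Finset.range (i+1)).image v)
          (A.filter (fun x => adj x wi))
        omega
      obtain ⟨vi, hvi⟩ := hv
      rw [Finset.mem_sdiff, Finset.mem_filter] at hvi
      obtain ⟨⟨hviA, hviadj⟩, hvifresh⟩ := hvi
      refine ⟨fun m => if m = i + 1 then vi else v m, fun j => if j = i then wi else w j,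
        ?_, ?_, ?_, ?_, ?_⟩
      · intro m hm
        beta_reduce
        by_cases h : m = i + 1
        · rwa [if_pos h]
        · rw [if_neg h]; exact h1 m (by omega)
      · intro j hj
        beta_reduce
        by_cases h : j = i
        · rwa [if_pos h]
        · rw [if_neg h]; exact h2 j (by omega)
      · intro m hm j hj heq
        beta_reduce at heq
        by_cases hm1 : m = i + 1 <;> by_cases hj1 : j = i + 1
        · omega
        · exfalso; rw [if_pos hm1, if_neg hj1] at heq
          exact hvifresh (Finset.mem_image.mpr ⟨j, Finset.mem_range.mpr (by omega), heq.symm⟩)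
        · exfalso; rw [if_neg hm1, if_pos hj1] at heq
          exact hvifresh (Finset.mem_image.mpr ⟨m, Finset.mem_range.mpr (by omega), heq⟩)
        · rw [if_neg hm1, if_neg hj1] at heq
          exact h3 m (by omega) j (by omega) heq
      · intro m hm j hj heq
        beta_reduce at heq
        by_cases hm1 : m = i <;> by_cases hj1 : j = i
        · omega
        · exfalso; rw [if_pos hm1, if_neg hj1] at heq
          exact hwifresh (Finset.mem_image.mpr ⟨j, Finset.mem_range.mpr (by omega), heq.symm⟩)
        · exfalso; rw [if_neg hm1, if_pos hj1] at heq
          exact hwifresh (Finset.mem_image.mpr ⟨m, Finset.mem_range.mpr (by omega), heq⟩)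
        · rw [if_neg hm1, if_neg hj1] at heq
          exact h4 m (by omega) j (by omega) heq
      · intro j hj
        beta_reduce
        by_cases h : j = i
        · subst h
          rw [if_neg (by omega : ¬ j = j + 1), if_pos rfl, if_pos rfl]
          exact ⟨hwiadj, hviadj⟩
        · rw [if_neg (by omega : ¬ j = i + 1), if_neg h, if_neg (by omega : ¬ j + 1 = i + 1)]
          exact h5 j (by omega)

lemma pairs_comm (adj : V → V → Prop) [DecidableRel adj] (A B : Finset V) :
    ∑ x ∈ A, (B.filter (fun y => adj x y)).card = ∑ y ∈ B, (A.filter (fun x => adj x y)).card := by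
  simp_rw [Finset.card_eq_sum_ones, Finset.sum_filter]
  exact Finset.sum_comm

lemma EG_bound (adj : V → V → Prop) [DecidableRel adj] {k : ℕ} (hk : 1 ≤ k) :
    ∀ N : ℕ, ∀ A B : Finset V, A.card + B.card ≤ N → ¬ APath adj A B k →
      ∑ x ∈ A, (B.filter (fun y => adj x y)).card ≤ (k-1) * A.card + k * (B.card + 1 - k) := by
  intro N
  induction N with
  | zero =>
      intro A B hN _
      have : A = ∅ := Finset.card_eq_zero.mp (by omega)
      subst this; simp
  | succ N ih =>
      intro A B hN hnp
      rcases A.eq_empty_or_nonempty with rfl | hAne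
      · simp
      by_cases hA : ∃ x ∈ A, (B.filter (fun y => adj x y)).card ≤ k - 1
      · obtain ⟨x, hxA, hdx⟩ := hA
        have hcardA : 1 ≤ A.card := Finset.card_pos.mpr ⟨x, hxA⟩
        have herase : (A.erase x).card = A.card - 1 := Finset.card_erase_of_mem hxA
        have hb := ih (A.erase x) B (by omega)
          (fun hp => hnp (hp.mono (Finset.erase_subset _ _) subset_rfl))
        have hsum := Finset.sum_erase_add A (fun x' => (B.filter (fun y => adj x' y)).card) hxA
        beta_reduce at hsum
        have hmul : (k-1) * (A.erase x).card + (k-1) = (k-1) * A.card := by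
          rw [← Finset.card_erase_add_one hxA, Nat.mul_add, Nat.mul_one]
        omega
      · push_neg at hA
        have hA' : ∀ x ∈ A, k ≤ (B.filter (fun y => adj x y)).card := fun x hx => by
          have := hA x hx; omega
        obtain ⟨x₀, hx₀⟩ := hAne
        have hbk : k ≤ B.card :=
          le_trans (hA' x₀ hx₀) (Finset.card_le_card (Finset.filter_subset _ _))
        by_cases hB : ∃ y ∈ B, (A.filter (fun x => adj x y)).card ≤ k
        · obtain ⟨y, hyB, hdy⟩ := hB
          have hcardB : 1 ≤ B.card := Finset.card_pos.mpr ⟨y, hyB⟩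
          have herase : (B.erase y).card = B.card - 1 := Finset.card_erase_of_mem hyB
          have hb := ih A (B.erase y) (by omega)
            (fun hp => hnp (hp.mono subset_rfl (Finset.erase_subset _ _)))
          rw [pairs_comm] at hb ⊢
          have hsum := Finset.sum_erase_add B (fun y' => (A.filter (fun x => adj x y')).card) hyB
          beta_reduce at hsum
          have hmul : k * ((B.erase y).card + 1 - k) + k = k * (B.card + 1 - k) := by
            have e1 : (B.erase y).card + 1 - k = B.card - k := by omega
            have e2 : B.card + 1 - k = (B.card - k) + 1 := by omega
            rw [e1, e2, Nat.mul_add, Nat.mul_one]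
          omega
        · push_neg at hB
          have hB' : ∀ y ∈ B, k + 1 ≤ (A.filter (fun x => adj x y)).card := fun y hy => by
            have := hB y hy; omega
          exact absurd (exists_apath adj ⟨x₀, hx₀⟩ hA' hB') hnp

lemma apath_hasCycle {V : Type*} {G : SimpleGraph V} {u : V} {A B : Finset V}
    (hA : ∀ x, x ∈ A ↔ G.Adj u x) (huB : u ∉ B) (hdisj : ∀ x ∈ A, x ∉ B)
    {k : ℕ} (hk : 1 ≤ k) (hp : APath G.Adj A B k) : HasCycleOn G (2*k+2) := by
  obtain ⟨v, w, h1, h2, h3, h4, h5⟩ := hp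
  have huA : u ∉ A := fun h => G.loopless.irrefl u ((hA u).mp h)
  have key : ∀ d i, i + d = k → ∃ P : G.Walk (v i) u, P.IsPath ∧ P.length = 2*d+1 ∧
      (∀ x, x ∈ P.support → x = u ∨ (∃ j, i ≤ j ∧ j ≤ k ∧ x = v j) ∨
        (∃ j, i ≤ j ∧ j < k ∧ x = w j)) ∧
      (∀ e ∈ P.edges, u ∈ e → e = s(v k, u)) := by
    intro d
    induction d with
    | zero =>
        intro i hik
        have hik' : i = k := by omega
        subst hik'
        refine ⟨Walk.cons (((hA (v i)).mp (h1 i le_rfl)).symm) Walk.nil, ?_, ?_, ?_, ?_⟩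
        · rw [Walk.cons_isPath_iff]
          refine ⟨Walk.IsPath.nil, ?_⟩
          rw [Walk.support_nil]
          intro hmem
          rw [List.mem_singleton] at hmem
          exact huA (hmem ▸ h1 i le_rfl)
        · simp
        · intro x hx
          rw [Walk.support_cons, Walk.support_nil] at hx
          rcases List.mem_cons.mp hx with hx | hx
          · exact Or.inr (Or.inl ⟨i, le_rfl, le_rfl, hx⟩)
          · rw [List.mem_singleton] at hx; exact Or.inl hx
        · intro e he _
          rw [Walk.edges_cons, Walk.edges_nil, List.mem_singleton] at he
          exact he
    | succ d ihd =>
        intro i hik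
        obtain ⟨P, hPp, hPl, hPs, hPe⟩ := ihd (i+1) (by omega)
        have hik2 : i < k := by omega
        have ha1 : G.Adj (v i) (w i) := (h5 i hik2).1
        have ha2 : G.Adj (w i) (v (i+1)) := ((h5 i hik2).2).symm
        refine ⟨Walk.cons ha1 (Walk.cons ha2 P), ?_, ?_, ?_, ?_⟩
        · rw [Walk.cons_isPath_iff, Walk.cons_isPath_iff]
          refine ⟨⟨hPp, ?_⟩, ?_⟩
          · intro hmem
            rcases hPs (w i) hmem with hx | ⟨j, hj1, hj2, hx⟩ | ⟨j, hj1, hj2, hx⟩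
            · exact huB (hx ▸ h2 i hik2)
            · exact hdisj (v j) (h1 j hj2) (hx ▸ h2 i hik2)
            · exact absurd (h4 i hik2 j hj2 hx) (by omega)
          · rw [Walk.support_cons]
            intro hmem
            rcases List.mem_cons.mp hmem with hx | hmem2
            · exact hdisj (v i) (h1 i (by omega)) (hx ▸ h2 i hik2)
            · rcases hPs (v i) hmem2 with hx | ⟨j, hj1, hj2, hx⟩ | ⟨j, hj1, hj2, hx⟩
              · exact huA (hx ▸ h1 i (by omega))
              · exact absurd (h3 i (by omega) j hj2 hx) (by omega)
              · exact hdisj (v i) (h1 i (by omega)) (hx ▸ h2 j hj2)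
        · rw [Walk.length_cons, Walk.length_cons, hPl]; omega
        · intro x hx
          rw [Walk.support_cons, Walk.support_cons] at hx
          rcases List.mem_cons.mp hx with hx | hx
          · exact Or.inr (Or.inl ⟨i, le_rfl, by omega, hx⟩)
          rcases List.mem_cons.mp hx with hx | hx
          · exact Or.inr (Or.inr ⟨i, le_rfl, hik2, hx⟩)
          · rcases hPs x hx with hx | ⟨j, hj1, hj2, hx⟩ | ⟨j, hj1, hj2, hx⟩
            · exact Or.inl hx
            · exact Or.inr (Or.inl ⟨j, by omega, hj2, hx⟩)
            · exact Or.inr (Or.inr ⟨j, by omega, hj2, hx⟩)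
        · intro e he hue
          rw [Walk.edges_cons, Walk.edges_cons] at he
          rcases List.mem_cons.mp he with he | he
          · subst he
            rcases Sym2.mem_iff.mp hue with hx | hx
            · exact absurd (hx ▸ h1 i (by omega)) huA
            · exact absurd (hx ▸ h2 i hik2) huB
          rcases List.mem_cons.mp he with he | he
          · subst he
            rcases Sym2.mem_iff.mp hue with hx | hx
            · exact absurd (hx ▸ h2 i hik2) huB
            · exact absurd (hx ▸ h1 (i+1) (by omega)) huA
          · exact hPe e he hue
  obtain ⟨P, hPp, hPl, _, hPe⟩ := key k 0 (by omega)
  have hadj : G.Adj u (v 0) := (hA (v 0)).mp (h1 0 (by omega))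
  have hedge : s(u, v 0) ∉ P.edges := by
    intro hmem
    have := hPe _ hmem (by rw [Sym2.mem_iff]; exact Or.inl rfl)
    rw [Sym2.eq_iff] at this
    rcases this with ⟨h1', _⟩ | ⟨_, h2'⟩
    · exact huA (h1' ▸ h1 k le_rfl)
    · exact absurd (h3 0 (by omega) k le_rfl h2') (by omega)
  refine ⟨u, Walk.cons hadj P, SimpleGraph.Path.cons_isCycle ⟨P, hPp⟩ hadj hedge, ?_⟩
  rw [Walk.length_cons, hPl]

lemma prod_mono_nat {t k n : ℕ} (h1 : t ≤ k) (h2 : 2*k ≤ n) : (n - t) * t ≤ k * (n - k) := by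
  have e : n - t = (n - k) + (k - t) := by omega
  have h3 : t ≤ n - k := by omega
  calc (n-t)*t = (n-k)*t + (k-t)*t := by rw [e, Nat.add_mul]
    _ ≤ (n-k)*t + (k-t)*(n-k) := Nat.add_le_add_left (Nat.mul_le_mul_left _ h3) _
    _ = (n-k)*(t + (k-t)) := by ring
    _ = (n-k)*k := by congr 1; omega
    _ = k*(n-k) := Nat.mul_comm _ _

variable [Fintype V]

/-- Sum of degrees over the neighbourhood of `u`. -/
def Sdeg (G : SimpleGraph V) [DecidableRel G.Adj] (u : V) : ℕ :=
  ∑ v ∈ G.neighborFinset u, G.degree v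

/-- The set of vertices at distance two from `u` (having a neighbour in `N(u)`). -/
def Wset (G : SimpleGraph V) [DecidableRel G.Adj] (u : V) : Finset V :=
  Finset.univ.filter (fun w => w ≠ u ∧ ∃ v ∈ G.neighborFinset u, G.Adj v w)

lemma Sdeg_le {G : SimpleGraph V} [DecidableRel G.Adj]
    {k : ℕ} (hk : 1 ≤ k) (hn : 2*k+2 ≤ Fintype.card V)
    (hbip : ∃ s : Set V, ∀ ⦃v w : V⦄, G.Adj v w → (v ∈ s ↔ w ∉ s))
    (hfree : ¬ HasCycleOn G (2*k+2)) (u : V) :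
    Sdeg G u ≤ k * (Fintype.card V - k) ∧
      (Sdeg G u = k * (Fintype.card V - k) →
        (G.neighborFinset u ∪ Wset G u ∪ {u} : Finset V) = Finset.univ) := by
  classical
  obtain ⟨s, hs⟩ := hbip
  set n := Fintype.card V with hn_def
  set A := G.neighborFinset u with hA_def
  set B := Wset G u with hB_def
  have huA : u ∉ A := by simp [hA_def]
  have huB : u ∉ B := by simp [hB_def, Wset]
  have hdisjAB : ∀ x ∈ A, x ∉ B := by
    intro x hxA hxB
    rw [hB_def, Wset, Finset.mem_filter] at hxB
    obtain ⟨-, -, v, hvA, hvx⟩ := hxB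
    rw [SimpleGraph.mem_neighborFinset] at hxA hvA
    have h1 := hs hxA
    have h2 := hs hvA
    have h3 := hs hvx
    tauto
  have hcard : 1 + A.card + B.card ≤ n := by
    have hd1 : Disjoint A B := Finset.disjoint_left.mpr hdisjAB
    have hd2 : Disjoint (A ∪ B) ({u} : Finset V) := by
      rw [Finset.disjoint_singleton_right, Finset.mem_union]
      rintro (h | h)
      · exact huA h
      · exact huB h
    have := Finset.card_le_univ (A ∪ B ∪ {u})
    rw [Finset.card_union_of_disjoint hd2, Finset.card_union_of_disjoint hd1,
      Finset.card_singleton] at this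
    omega
  have hunion : A.card + B.card + 1 = n →
      (G.neighborFinset u ∪ Wset G u ∪ {u} : Finset V) = Finset.univ := by
    intro h
    apply Finset.eq_univ_of_card
    have hd1 : Disjoint A B := Finset.disjoint_left.mpr hdisjAB
    have hd2 : Disjoint (A ∪ B) ({u} : Finset V) := by
      rw [Finset.disjoint_singleton_right, Finset.mem_union]
      rintro (h | h)
      · exact huA h
      · exact huB h
    rw [← hA_def, ← hB_def, Finset.card_union_of_disjoint hd2,
      Finset.card_union_of_disjoint hd1, Finset.card_singleton, h]
  have hApath : ¬ APath G.Adj A B k := by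
    intro hp
    refine hfree (apath_hasCycle (fun x => ?_) huB hdisjAB hk hp)
    rw [hA_def, SimpleGraph.mem_neighborFinset]
  have hEG := EG_bound G.Adj hk (A.card + B.card) A B le_rfl hApath
  have hfilter : ∀ v ∈ A, B.filter (fun y => G.Adj v y) = (G.neighborFinset v).erase u := by
    intro v hvA
    ext y
    rw [Finset.mem_filter, Finset.mem_erase, SimpleGraph.mem_neighborFinset,
      hB_def, Wset, Finset.mem_filter]
    constructor
    · rintro ⟨⟨-, hy, -⟩, hadj⟩
      exact ⟨hy, hadj⟩
    · rintro ⟨hy, hadj⟩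
      exact ⟨⟨Finset.mem_univ _, hy, v, hvA, hadj⟩, hadj⟩
  set E := ∑ x ∈ A, (B.filter (fun y => G.Adj x y)).card with hE_def
  have hdeg : ∀ v ∈ A, G.degree v = (B.filter (fun y => G.Adj v y)).card + 1 := by
    intro v hv
    rw [hfilter v hv]
    have hu_mem : u ∈ G.neighborFinset v := by
      rw [SimpleGraph.mem_neighborFinset]
      exact ((SimpleGraph.mem_neighborFinset _ _ _).mp (hA_def ▸ hv)).symm
    have hpos : 0 < (G.neighborFinset v).card := Finset.card_pos.mpr ⟨u, hu_mem⟩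
    rw [Finset.card_erase_of_mem hu_mem, SimpleGraph.card_neighborFinset_eq_degree]
    rw [← SimpleGraph.card_neighborFinset_eq_degree] at *
    omega
  have hSdeg_eq : Sdeg G u = A.card + E := by
    rw [Sdeg, ← hA_def, Finset.sum_congr rfl hdeg, Finset.sum_add_distrib, Finset.sum_const,
      smul_eq_mul, Nat.mul_one, hE_def, Nat.add_comm]
  by_cases hb : k ≤ B.card
  · -- many distance-two vertices: use the Erdős–Gallai type bound
    have hm1 : A.card + ((k-1) * A.card + k * (B.card + 1 - k))
        = k * (A.card + B.card + 1 - k) := by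
      have e1 : A.card + (k-1) * A.card = k * A.card := by
        have ek : 1 + (k-1) = k := by omega
        calc A.card + (k-1)*A.card = (1 + (k-1)) * A.card := by ring
          _ = k * A.card := by rw [ek]
      have e2 : k * A.card + k * (B.card + 1 - k) = k * (A.card + (B.card + 1 - k)) :=
        (Nat.mul_add _ _ _).symm
      have e3 : A.card + (B.card + 1 - k) = A.card + B.card + 1 - k := by omega
      rw [← Nat.add_assoc, e1, e2, e3]
    have hfin : k * (A.card + B.card + 1 - k) ≤ k * (n - k) :=
      Nat.mul_le_mul le_rfl (by omega)
    constructor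
    · omega
    · intro heq
      have hge : k * (n - k) ≤ k * (A.card + B.card + 1 - k) := by omega
      have := Nat.le_of_mul_le_mul_left hge (by omega : 0 < k)
      apply hunion
      omega
  · push_neg at hb
    have hE : E ≤ A.card * B.card := by
      rw [hE_def]
      calc ∑ x ∈ A, (B.filter (fun y => G.Adj x y)).card
          ≤ ∑ _x ∈ A, B.card :=
            Finset.sum_le_sum (fun x _ => Finset.card_le_card (Finset.filter_subset _ _))
        _ = A.card * B.card := by rw [Finset.sum_const, smul_eq_mul]
    have h1 : Sdeg G u ≤ A.card * (B.card + 1) := by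
      rw [hSdeg_eq]
      calc A.card + E ≤ A.card + A.card * B.card := by omega
        _ = A.card * (B.card + 1) := by ring
    have h2 : A.card * (B.card+1) ≤ (n - (B.card+1)) * (B.card+1) :=
      Nat.mul_le_mul (by omega) le_rfl
    have h3 : (n - (B.card+1)) * (B.card+1) ≤ k * (n-k) :=
      prod_mono_nat (by omega) (by omega)
    constructor
    · omega
    · intro heq
      have he1 : A.card * (B.card+1) = (n - (B.card+1)) * (B.card+1) := by omega
      have he2 : A.card = n - (B.card+1) :=
        Nat.eq_of_mul_eq_mul_right (by omega) he1
      apply hunion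
      omega

lemma adjMat_mulVec (G : SimpleGraph V) [DecidableRel G.Adj] (y : V → ℝ) (v : V) :
    (adjMat G).mulVec y v = ∑ w ∈ G.neighborFinset v, y w := by
  rw [Matrix.mulVec, dotProduct, SimpleGraph.neighborFinset_eq_filter,
    Finset.sum_filter]
  apply Finset.sum_congr rfl
  intro w _
  by_cases h : G.Adj v w <;> simp [adjMat, h]

lemma mulVec_mulVec_eq (G : SimpleGraph V) [DecidableRel G.Adj] {μ : ℝ} {x : V → ℝ}
    (heig : (adjMat G).mulVec x = μ • x) (y : V) :
    μ^2 * x y = ∑ v ∈ G.neighborFinset y, ∑ w ∈ G.neighborFinset v, x w := by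
  have h2 : (adjMat G).mulVec ((adjMat G).mulVec x) = (μ^2) • x := by
    rw [heig, Matrix.mulVec_smul, heig, smul_smul, ← sq]
  have h3 := congrFun h2 y
  rw [adjMat_mulVec] at h3
  rw [Finset.sum_congr rfl (fun v _ => adjMat_mulVec G x v)] at h3
  rw [Pi.smul_apply, smul_eq_mul] at h3
  exact h3.symm

lemma sum_sum_le (G : SimpleGraph V) [DecidableRel G.Adj] {x : V → ℝ}
    {y : V} (hmax : ∀ v, |x v| ≤ x y) :
    ∑ v ∈ G.neighborFinset y, ∑ w ∈ G.neighborFinset v, x w ≤ (Sdeg G y : ℝ) * x y := by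
  calc ∑ v ∈ G.neighborFinset y, ∑ w ∈ G.neighborFinset v, x w
      ≤ ∑ v ∈ G.neighborFinset y, ∑ _w ∈ G.neighborFinset v, x y :=
        Finset.sum_le_sum (fun v _ => Finset.sum_le_sum
          (fun w _ => le_trans (le_abs_self _) (hmax w)))
    _ = ∑ v ∈ G.neighborFinset y, (G.degree v : ℝ) * x y := by
        apply Finset.sum_congr rfl
        intro v _
        rw [Finset.sum_const, nsmul_eq_mul, SimpleGraph.card_neighborFinset_eq_degree]
    _ = (Sdeg G y : ℝ) * x y := by
        rw [← Finset.sum_mul, Sdeg, Nat.cast_sum]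

lemma exists_good_eigvec (G : SimpleGraph V) [Nonempty V] {μ : ℝ}
    (h : IsAdjEigenvalue G μ) :
    ∃ (x : V → ℝ) (u : V), (adjMat G).mulVec x = μ • x ∧ 0 < x u ∧ ∀ v, |x v| ≤ x u := by
  obtain ⟨x, hx0, heig⟩ := h
  obtain ⟨u, -, hu⟩ := Finset.exists_max_image Finset.univ (fun v => |x v|)
    ⟨Classical.arbitrary V, Finset.mem_univ _⟩
  have hmax : ∀ v, |x v| ≤ |x u| := fun v => hu v (Finset.mem_univ v)
  have hupos : 0 < |x u| := by
    obtain ⟨v, hv⟩ := Function.ne_iff.mp hx0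
    exact lt_of_lt_of_le (abs_pos.mpr hv) (hmax v)
  rcases le_or_gt 0 (x u) with hsgn | hsgn
  · exact ⟨x, u, heig, by rwa [abs_of_nonneg hsgn] at hupos,
      fun v => by rw [← abs_of_nonneg hsgn]; exact hmax v⟩
  · refine ⟨-x, u, ?_, ?_, ?_⟩
    · rw [Matrix.mulVec_neg, heig, ← smul_neg]
    · simpa using hsgn
    · intro v
      rw [Pi.neg_apply, Pi.neg_apply, abs_neg, ← abs_of_neg hsgn]
      exact hmax v

lemma eig_sq_le (G : SimpleGraph V) [DecidableRel G.Adj] [Nonempty V] {μ : ℝ}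
    (h : IsAdjEigenvalue G μ) {K : ℕ} (hS : ∀ v, Sdeg G v ≤ K) : μ^2 ≤ (K : ℝ) := by
  obtain ⟨x, u, heig, hxu, hmax⟩ := exists_good_eigvec G h
  have h1 := mulVec_mulVec_eq G heig u
  have h2 := sum_sum_le G (x := x) (y := u) hmax
  have h3 : (Sdeg G u : ℝ) * x u ≤ (K : ℝ) * x u :=
    mul_le_mul_of_nonneg_right (Nat.cast_le.mpr (hS u)) hxu.le
  have : μ^2 * x u ≤ (K : ℝ) * x u := by rw [h1]; exact le_trans h2 h3
  exact le_of_mul_le_mul_right this hxu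

lemma rigid (G : SimpleGraph V) [DecidableRel G.Adj] {μ : ℝ} {x : V → ℝ} {K : ℕ}
    (heig : (adjMat G).mulVec x = μ • x) (hμ : μ^2 = (K : ℝ)) (hS : ∀ v, Sdeg G v ≤ K)
    {y : V} (hy : 0 < x y) (hmax : ∀ v, |x v| ≤ x y) :
    Sdeg G y = K ∧ ∀ v ∈ G.neighborFinset y, ∀ w ∈ G.neighborFinset v, x w = x y := by
  have hkey := mulVec_mulVec_eq G heig y
  rw [hμ] at hkey
  have hle1 := sum_sum_le G (x := x) (y := y) hmax
  have hSy : (Sdeg G y : ℝ) * x y ≤ (K : ℝ) * x y :=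
    mul_le_mul_of_nonneg_right (Nat.cast_le.mpr (hS y)) hy.le
  have heq2 : (Sdeg G y : ℝ) * x y = (K : ℝ) * x y := le_antisymm hSy (by rw [hkey]; exact hle1)
  have hSdeg : Sdeg G y = K := by
    have := mul_right_cancel₀ (ne_of_gt hy) heq2
    exact_mod_cast this
  refine ⟨hSdeg, ?_⟩
  have hzero : ∑ v ∈ G.neighborFinset y, ∑ w ∈ G.neighborFinset v, (x y - x w) = 0 := by
    have e1 : ∑ v ∈ G.neighborFinset y, ∑ w ∈ G.neighborFinset v, (x y - x w)
        = (Sdeg G y : ℝ) * x y - ∑ v ∈ G.neighborFinset y, ∑ w ∈ G.neighborFinset v, x w := by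
      rw [Finset.sum_congr rfl (fun v _ => Finset.sum_sub_distrib _ _), Finset.sum_sub_distrib]
      congr 1
      rw [Finset.sum_congr rfl (fun v _ => ?_), ← Finset.sum_mul, Sdeg, Nat.cast_sum]
      rw [Finset.sum_const, nsmul_eq_mul, SimpleGraph.card_neighborFinset_eq_degree]
    rw [e1, ← hkey, heq2, hkey]
    ring
  have hnn : ∀ v ∈ G.neighborFinset y, 0 ≤ ∑ w ∈ G.neighborFinset v, (x y - x w) :=
    fun v _ => Finset.sum_nonneg (fun w _ => sub_nonneg.mpr (le_trans (le_abs_self _) (hmax w)))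
  have houter := (Finset.sum_eq_zero_iff_of_nonneg hnn).mp hzero
  intro v hv w hw
  have hinner := (Finset.sum_eq_zero_iff_of_nonneg
    (fun w' (_ : w' ∈ G.neighborFinset v) =>
      sub_nonneg.mpr (le_trans (le_abs_self _) (hmax w')))).mp (houter v hv)
  have := hinner w hw
  linarith [this]

lemma spec_set_finite (G : SimpleGraph V) :
    {r : ℝ | ∃ μ, IsAdjEigenvalue G μ ∧ r = |μ|}.Finite := by
  have h1 : {μ : ℝ | IsAdjEigenvalue G μ}.Finite := by
    apply Set.Finite.subset (Module.End.finite_hasEigenvalue (Matrix.toLin' (adjMat G)))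
    intro μ hμ
    obtain ⟨x, hx0, heig⟩ := hμ
    exact Module.End.hasEigenvalue_of_hasEigenvector
      ⟨Module.End.mem_eigenspace_iff.mpr (by rw [Matrix.toLin'_apply, heig]), hx0⟩
  have h2 : {r : ℝ | ∃ μ, IsAdjEigenvalue G μ ∧ r = |μ|} ⊆ abs '' {μ | IsAdjEigenvalue G μ} := by
    rintro r ⟨μ, hμ, rfl⟩
    exact ⟨μ, hμ, rfl⟩
  exact (h1.image _).subset h2


lemma eig_completeBipartite {n k : ℕ} (G : SimpleGraph (Fin n)) (hk : 0 < k) (hkn : k < n)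
    (e : G ≃g completeBipartiteGraph (Fin k) (Fin (n-k))) :
    IsAdjEigenvalue G (Real.sqrt (k * (n-k) : ℕ)) := by
  classical
  have hβpos : (0:ℝ) < ((n - k : ℕ) : ℝ) := by
    have : 0 < n - k := by omega
    exact_mod_cast this
  have hαpos : (0:ℝ) < ((k : ℕ) : ℝ) := by exact_mod_cast hk
  have hμ : Real.sqrt ((k * (n-k) : ℕ) : ℝ)
      = Real.sqrt ((k:ℕ):ℝ) * Real.sqrt ((n-k:ℕ):ℝ) := by
    rw [Nat.cast_mul, Real.sqrt_mul hαpos.le]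
  set x : Fin n → ℝ := fun v => Sum.elim (fun _ => Real.sqrt ((n-k:ℕ):ℝ))
    (fun _ => Real.sqrt ((k:ℕ):ℝ)) (e v) with hx_def
  have hsq_α : Real.sqrt ((k:ℕ):ℝ) * Real.sqrt ((k:ℕ):ℝ) = ((k:ℕ):ℝ) :=
    Real.mul_self_sqrt hαpos.le
  have hsq_β : Real.sqrt ((n-k:ℕ):ℝ) * Real.sqrt ((n-k:ℕ):ℝ) = ((n-k:ℕ):ℝ) :=
    Real.mul_self_sqrt hβpos.le
  refine ⟨x, ?_, ?_⟩
  · intro h0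
    have h1 := congrFun h0 (e.symm (Sum.inl ⟨0, hk⟩))
    rw [hx_def] at h1
    beta_reduce at h1
    rw [RelIso.apply_symm_apply] at h1
    simp only [Sum.elim_inl, Pi.zero_apply] at h1
    exact (Real.sqrt_ne_zero'.mpr hβpos) h1
  · funext v
    have hre : ∀ f : Fin n → ℝ, ∑ y : Fin k ⊕ Fin (n-k), f (e.symm y) = ∑ w, f w :=
      fun f => Equiv.sum_comp e.symm.toEquiv f
    rw [Matrix.mulVec, dotProduct, ← hre (fun w => adjMat G v w * x w)]
    have hterm : ∀ y : Fin k ⊕ Fin (n-k),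
        adjMat G v (e.symm y) * x (e.symm y)
          = (if (completeBipartiteGraph (Fin k) (Fin (n-k))).Adj (e v) y then 1 else 0)
            * Sum.elim (fun _ => Real.sqrt ((n-k:ℕ):ℝ)) (fun _ => Real.sqrt ((k:ℕ):ℝ)) y := by
      intro y
      have hadj : G.Adj v (e.symm y) ↔
          (completeBipartiteGraph (Fin k) (Fin (n-k))).Adj (e v) y := by
        conv_rhs => rw [← RelIso.apply_symm_apply e y]
        exact (e.map_adj_iff).symm
      have hx1 : x (e.symm y)
          = Sum.elim (fun _ => Real.sqrt ((n-k:ℕ):ℝ)) (fun _ => Real.sqrt ((k:ℕ):ℝ)) y := by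
        rw [hx_def]
        beta_reduce
        rw [RelIso.apply_symm_apply]
      rw [hx1]
      congr 1
      by_cases h : G.Adj v (e.symm y)
      · rw [if_pos (hadj.mp h)]; simp [adjMat, h]
      · rw [if_neg (fun hc => h (hadj.mpr hc))]; simp [adjMat, h]
    rw [Finset.sum_congr rfl (fun y _ => hterm y)]
    rw [Fintype.sum_sum_type]
    rcases hev : e v with i | j
    · have hxv : x v = Real.sqrt ((n-k:ℕ):ℝ) := by
        rw [hx_def]; beta_reduce; rw [hev]; rfl
      simp only [completeBipartiteGraph, hev, Sum.isLeft_inl, Sum.isRight_inl,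
        Sum.isLeft_inr, Sum.isRight_inr]
      norm_num
      rw [hxv, mul_assoc, hsq_β]
      ring
    · have hxv : x v = Real.sqrt ((k:ℕ):ℝ) := by
        rw [hx_def]; beta_reduce; rw [hev]; rfl
      simp only [completeBipartiteGraph, hev, Sum.isLeft_inl, Sum.isRight_inl,
        Sum.isLeft_inr, Sum.isRight_inr]
      norm_num
      rw [hxv, mul_right_comm, hsq_α]

lemma structure_of_equality {V : Type*} [Fintype V] [DecidableEq V] {G : SimpleGraph V}
    [DecidableRel G.Adj] {k : ℕ} (hk : 1 ≤ k) (hn : 2*k+2 ≤ Fintype.card V)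
    (hbip : ∃ s : Set V, ∀ ⦃v w : V⦄, G.Adj v w → (v ∈ s ↔ w ∉ s))
    (hfree : ¬ HasCycleOn G (2*k+2))
    {μ : ℝ} (heigv : IsAdjEigenvalue G μ)
    (hμsq : μ^2 = ((k * (Fintype.card V - k) : ℕ) : ℝ)) :
    ∃ S T : Finset V, (∀ v, v ∈ S ↔ v ∉ T) ∧ S.card = k ∧ T.card = Fintype.card V - k ∧
      (∀ v w, G.Adj v w ↔ ((v ∈ S ∧ w ∈ T) ∨ (v ∈ T ∧ w ∈ S))) := by
  classical
  obtain ⟨s, hs⟩ := hbip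
  set n := Fintype.card V with hn_def
  set K := k * (n - k) with hK_def
  have hNe : Nonempty V := Fintype.card_pos_iff.mp (by omega)
  have hSd : ∀ u, Sdeg G u ≤ K := fun u => (Sdeg_le hk hn ⟨s, hs⟩ hfree u).1
  obtain ⟨x, u, heig, hxu, hmax⟩ := exists_good_eigvec G heigv
  obtain ⟨hSu, hprop⟩ := rigid G heig hμsq hSd hxu hmax
  have huniv := (Sdeg_le hk hn ⟨s, hs⟩ hfree u).2 hSu
  set Q := G.neighborFinset u with hQ_def
  set P := insert u (Wset G u) with hP_def
  have huQ : u ∉ Q := by simp [hQ_def]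
  have hQW : ∀ y ∈ Q, y ∉ Wset G u := by
    intro y hyQ hyW
    rw [Wset, Finset.mem_filter] at hyW
    obtain ⟨-, -, v, hvQ, hvy⟩ := hyW
    rw [hQ_def, SimpleGraph.mem_neighborFinset] at hyQ
    rw [SimpleGraph.mem_neighborFinset] at hvQ
    have h1 := hs hyQ; have h2 := hs hvQ; have h3 := hs hvy
    tauto
  have hpartPQ : ∀ v, v ∈ P ↔ v ∉ Q := by
    intro v
    constructor
    · intro hvP hvQ
      rw [hP_def, Finset.mem_insert] at hvP
      rcases hvP with rfl | hvW
      · exact huQ hvQ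
      · exact hQW v hvQ hvW
    · intro hvQ
      have hv : v ∈ Q ∪ Wset G u ∪ {u} := huniv ▸ Finset.mem_univ v
      rw [Finset.mem_union, Finset.mem_union, Finset.mem_singleton] at hv
      rw [hP_def, Finset.mem_insert]
      tauto
  have hclassP : ∀ p ∈ P, (p ∈ s ↔ u ∈ s) := by
    intro p hp
    rw [hP_def, Finset.mem_insert] at hp
    rcases hp with rfl | hpW
    · tauto
    · rw [Wset, Finset.mem_filter] at hpW
      obtain ⟨-, -, v, hvQ, hvp⟩ := hpW
      rw [SimpleGraph.mem_neighborFinset] at hvQ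
      have h1 := hs hvQ; have h2 := hs hvp
      tauto
  have hPind : ∀ p ∈ P, ∀ q ∈ P, ¬ G.Adj p q := by
    intro p hp q hq hadj
    have h1 := hclassP p hp; have h2 := hclassP q hq; have h3 := hs hadj
    tauto
  have hQind : ∀ p ∈ Q, ∀ q ∈ Q, ¬ G.Adj p q := by
    intro p hp q hq hadj
    rw [hQ_def, SimpleGraph.mem_neighborFinset] at hp hq
    have h1 := hs hp; have h2 := hs hq; have h3 := hs hadj
    tauto
  have hNQ : ∀ y ∈ Q, G.neighborFinset y ⊆ P := by
    intro y hy w hw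
    rw [SimpleGraph.mem_neighborFinset] at hw
    rw [hpartPQ]
    intro hwQ
    exact hQind y hy w hwQ hw
  have hNP : ∀ p ∈ P, G.neighborFinset p ⊆ Q := by
    intro p hp w hw
    rw [SimpleGraph.mem_neighborFinset] at hw
    by_contra hwQ
    exact hPind p hp w ((hpartPQ w).mpr hwQ) hw
  have hSP : ∀ p ∈ P, Sdeg G p = K := by
    intro p hp
    rw [hP_def, Finset.mem_insert] at hp
    rcases hp with rfl | hpW
    · exact hSu
    · have hxp : x p = x u := by
        rw [Wset, Finset.mem_filter] at hpW
        obtain ⟨-, -, v, hvQ, hvp⟩ := hpW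
        exact hprop v hvQ p ((SimpleGraph.mem_neighborFinset _ _ _).mpr hvp)
      have h1 : 0 < x p := by rw [hxp]; exact hxu
      have h2 : ∀ v, |x v| ≤ x p := fun v => by rw [hxp]; exact hmax v
      exact (rigid G heig hμsq hSd h1 h2).1
  have hsum1 : ∑ y ∈ Q, G.degree y = K := hSu
  have hdouble : ∑ p ∈ P, Sdeg G p = ∑ y ∈ Q, G.degree y * G.degree y := by
    unfold Sdeg
    have e1 : ∀ p ∈ P, G.neighborFinset p = Q.filter (fun y => G.Adj p y) := by
      intro p hp
      ext y
      rw [Finset.mem_filter, SimpleGraph.mem_neighborFinset]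
      constructor
      · intro h
        exact ⟨hNP p hp ((SimpleGraph.mem_neighborFinset _ _ _).mpr h), h⟩
      · exact fun h => h.2
    rw [Finset.sum_congr rfl (fun p hp => by rw [e1 p hp, Finset.sum_filter])]
    rw [Finset.sum_comm]
    apply Finset.sum_congr rfl
    intro y hy
    rw [← Finset.sum_filter]
    have e2 : P.filter (fun p => G.Adj p y) = G.neighborFinset y := by
      ext p
      rw [Finset.mem_filter, SimpleGraph.mem_neighborFinset]
      constructor
      · rintro ⟨-, h⟩
        exact h.symm
      · intro h
        exact ⟨(hpartPQ p).mpr (fun hpQ => hQind y hy p hpQ h), h.symm⟩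
    rw [e2, Finset.sum_const, smul_eq_mul, SimpleGraph.card_neighborFinset_eq_degree]
  have hPK : ∑ p ∈ P, Sdeg G p = P.card * K := by
    rw [Finset.sum_congr rfl hSP, Finset.sum_const, smul_eq_mul]
  have hdegP : ∀ y ∈ Q, G.degree y ≤ P.card := by
    intro y hy
    rw [← SimpleGraph.card_neighborFinset_eq_degree]
    exact Finset.card_le_card (hNQ y hy)
  have hdegpos : ∀ y ∈ Q, 1 ≤ G.degree y := by
    intro y hy
    rw [← SimpleGraph.card_neighborFinset_eq_degree]
    refine Finset.card_pos.mpr ⟨u, ?_⟩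
    rw [SimpleGraph.mem_neighborFinset]
    rw [hQ_def, SimpleGraph.mem_neighborFinset] at hy
    exact hy.symm
  have hdeg_eq : ∀ y ∈ Q, G.degree y = P.card := by
    by_contra hcon
    push_neg at hcon
    obtain ⟨y₀, hy₀, hney⟩ := hcon
    have hlt : G.degree y₀ < P.card := lt_of_le_of_ne (hdegP y₀ hy₀) hney
    have hstrict : ∑ y ∈ Q, G.degree y * G.degree y < ∑ y ∈ Q, G.degree y * P.card := by
      apply Finset.sum_lt_sum
      · intro y hy
        exact Nat.mul_le_mul_left _ (hdegP y hy)
      · refine ⟨y₀, hy₀, ?_⟩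
        have h1 := hdegpos y₀ hy₀
        exact Nat.mul_lt_mul_of_le_of_lt (le_refl _) hlt (by omega)
    have hQP : ∑ y ∈ Q, G.degree y * P.card = K * P.card := by
      rw [← Finset.sum_mul, hsum1]
    have hcomm : P.card * K = K * P.card := Nat.mul_comm _ _
    omega
  have hNQfull : ∀ y ∈ Q, G.neighborFinset y = P := by
    intro y hy
    apply Finset.eq_of_subset_of_card_le (hNQ y hy)
    rw [SimpleGraph.card_neighborFinset_eq_degree, hdeg_eq y hy]
  have hadj_iff : ∀ v w, G.Adj v w ↔ ((v ∈ Q ∧ w ∈ P) ∨ (v ∈ P ∧ w ∈ Q)) := by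
    intro v w
    constructor
    · intro h
      by_cases hv : v ∈ Q
      · left
        exact ⟨hv, (hpartPQ w).mpr (fun hw => hQind v hv w hw h)⟩
      · right
        have hvP := (hpartPQ v).mpr hv
        refine ⟨hvP, ?_⟩
        by_contra hwQ
        exact hPind v hvP w ((hpartPQ w).mpr hwQ) h
    · rintro (⟨hvQ, hwP⟩ | ⟨hvP, hwQ⟩)
      · have hfull := hNQfull v hvQ
        rw [← SimpleGraph.mem_neighborFinset, hfull]
        exact hwP
      · have hfull := hNQfull w hwQ
        have : v ∈ G.neighborFinset w := by rw [hfull]; exact hvP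
        exact ((SimpleGraph.mem_neighborFinset _ _ _).mp this).symm
  have hPQcard : P.card + Q.card = n := by
    have hPc : P = Qᶜ := by
      ext v
      rw [Finset.mem_compl]
      exact hpartPQ v
    rw [hPc, Finset.card_compl]
    have := Finset.card_le_univ Q
    omega
  have hK2 : Q.card * P.card = K := by
    rw [← hsum1, Finset.sum_congr rfl hdeg_eq, Finset.sum_const, smul_eq_mul]
  have hkn : k ≤ n := by omega
  have hsolve : Q.card = k ∨ Q.card = n - k := by
    have h1 : (Q.card : ℤ) * ((n:ℤ) - Q.card) = (k:ℤ) * ((n:ℤ) - k) := by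
      have e1 : (P.card : ℤ) = (n:ℤ) - Q.card := by
        have h0 : ((P.card + Q.card : ℕ) : ℤ) = ((n:ℕ):ℤ) := by exact_mod_cast hPQcard
        push_cast at h0
        linarith
      have e2 : ((K:ℕ) : ℤ) = (k:ℤ) * ((n:ℤ) - k) := by
        rw [hK_def]
        push_cast [Nat.cast_sub hkn]
        ring
      have e3 : (Q.card : ℤ) * (P.card : ℤ) = ((K:ℕ) : ℤ) := by exact_mod_cast hK2
      rw [e1] at e3
      rw [e3]
      exact e2
    have hZ : ((Q.card:ℤ) - k) * ((Q.card:ℤ) - ((n:ℤ) - k)) = 0 := by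
      linear_combination -h1
    rcases mul_eq_zero.mp hZ with h | h
    · left; omega
    · right; omega
  rcases hsolve with hq | hq
  · refine ⟨Q, P, fun v => ?_, hq, by omega, fun v w => hadj_iff v w⟩
    have := hpartPQ v
    tauto
  · refine ⟨P, Q, fun v => hpartPQ v, by omega, by omega,
      fun v w => by rw [hadj_iff v w]; exact or_comm⟩

lemma iso_of_partition {n k : ℕ} (G : SimpleGraph (Fin n)) (S T : Finset (Fin n))
    (hpart : ∀ v, v ∈ S ↔ v ∉ T) (hS : S.card = k) (hT : T.card = n - k)
    (hadj : ∀ v w, G.Adj v w ↔ ((v ∈ S ∧ w ∈ T) ∨ (v ∈ T ∧ w ∈ S))) :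
    Nonempty (G ≃g completeBipartiteGraph (Fin k) (Fin (n-k))) := by
  classical
  have hTS : ∀ v : Fin n, (¬ v ∈ S) ↔ v ∈ T := by
    intro v
    have := hpart v
    tauto
  have eS : {v : Fin n // v ∈ S} ≃ Fin k :=
    Fintype.equivFinOfCardEq (by rw [Fintype.card_coe, hS])
  have eT : {v : Fin n // ¬ v ∈ S} ≃ Fin (n-k) :=
    (Equiv.subtypeEquivRight hTS).trans
      (Fintype.equivFinOfCardEq (by rw [Fintype.card_coe, hT]))
  set e : Fin n ≃ (Fin k ⊕ Fin (n-k)) :=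
    (Equiv.sumCompl (· ∈ S)).symm.trans (Equiv.sumCongr eS eT) with he_def
  have hev_pos : ∀ v (h : v ∈ S), e v = Sum.inl (eS ⟨v, h⟩) := by
    intro v h
    rw [he_def, Equiv.trans_apply, Equiv.sumCompl_symm_apply_of_pos h]
    rfl
  have hev_neg : ∀ v (h : ¬ v ∈ S), e v = Sum.inr (eT ⟨v, h⟩) := by
    intro v h
    rw [he_def, Equiv.trans_apply, Equiv.sumCompl_symm_apply_of_neg h]
    rfl
  refine ⟨⟨e, ?_⟩⟩
  intro v w
  show (completeBipartiteGraph (Fin k) (Fin (n-k))).Adj (e v) (e w) ↔ G.Adj v w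
  rw [hadj v w]
  by_cases hv : v ∈ S <;> by_cases hw : w ∈ S
  · rw [hev_pos v hv, hev_pos w hw]
    simp only [completeBipartiteGraph, Sum.isLeft_inl, Sum.isRight_inl]
    have h1 := (hpart v).mp hv
    have h2 := (hpart w).mp hw
    simp
    tauto
  · rw [hev_pos v hv, hev_neg w hw]
    simp only [completeBipartiteGraph, Sum.isLeft_inl, Sum.isRight_inl,
      Sum.isLeft_inr, Sum.isRight_inr]
    have h1 := (hpart v).mp hv
    have h2 := (hTS w).mp hw
    simp
    tauto
  · rw [hev_neg v hv, hev_pos w hw]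
    simp only [completeBipartiteGraph]
    have h1 := (hTS v).mp hv
    have h2 := (hpart w).mp hw
    simp
    tauto
  · rw [hev_neg v hv, hev_neg w hw]
    simp only [completeBipartiteGraph]
    have h1 := (hTS v).mp hv
    have h2 := (hTS w).mp hw
    simp
    tauto

end Aux

/-- Let `k ≥ 1` and let `G` be a `C_{2k+2}`-free bipartite graph of order `n ≥ 2k+2`.  Then
`ρ(G) ≤ √(k(n-k))`, with equality iff `G ≅ K_{k,n-k}`. -/
theorem leastEigenvalue_stmt9 (k n : ℕ) (hk : 1 ≤ k) (hn : 2 * k + 2 ≤ n)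
    (G : SimpleGraph (Fin n)) (hbip : _root_.IsBipartite G)
    (hfree : ¬ HasCycleOn G (2 * k + 2)) :
    specRad G ≤ Real.sqrt (k * (n - k) : ℕ) ∧
      (specRad G = Real.sqrt (k * (n - k) : ℕ) ↔
        Nonempty (G ≃g completeBipartiteGraph (Fin k) (Fin (n - k)))) := by
  classical
  letI : DecidableRel G.Adj := Classical.decRel _
  have hcard : Fintype.card (Fin n) = n := Fintype.card_fin n
  have hnV : 2*k+2 ≤ Fintype.card (Fin n) := by rw [hcard]; exact hn
  have hbip' : ∃ s : Set (Fin n), ∀ ⦃v w : Fin n⦄, G.Adj v w → (v ∈ s ↔ w ∉ s) := hbip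
  have hSd : ∀ u, Sdeg G u ≤ k * (n - k) := by
    intro u
    have h1 := (Sdeg_le hk hnV hbip' hfree u).1
    rwa [hcard] at h1
  have hNe : Nonempty (Fin n) := ⟨⟨0, by omega⟩⟩
  have hsqle : ∀ r ∈ {r : ℝ | ∃ μ, IsAdjEigenvalue G μ ∧ r = |μ|},
      r ≤ Real.sqrt ((k*(n-k):ℕ) : ℝ) := by
    rintro r ⟨μ, hμ, rfl⟩
    exact Real.abs_le_sqrt (eig_sq_le G hμ hSd)
  have hle : specRad G ≤ Real.sqrt ((k*(n-k):ℕ) : ℝ) := by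
    unfold specRad
    exact Real.sSup_le hsqle (Real.sqrt_nonneg _)
  refine ⟨hle, ?_, ?_⟩
  · intro heq
    have hKpos : 0 < k * (n-k) := Nat.mul_pos (by omega) (by omega)
    have hsqpos : 0 < Real.sqrt ((k*(n-k):ℕ) : ℝ) :=
      Real.sqrt_pos.mpr (by exact_mod_cast hKpos)
    have hne : {r : ℝ | ∃ μ, IsAdjEigenvalue G μ ∧ r = |μ|}.Nonempty := by
      by_contra h
      rw [Set.not_nonempty_iff_eq_empty] at h
      rw [specRad, h, Real.sSup_empty] at heq
      linarith
    have hmem : specRad G ∈ {r : ℝ | ∃ μ, IsAdjEigenvalue G μ ∧ r = |μ|} := by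
      rw [specRad]
      exact Set.Nonempty.csSup_mem hne (spec_set_finite G)
    obtain ⟨μ, hμeig, hμabs⟩ := hmem
    have hμsq : μ^2 = ((k * (Fintype.card (Fin n) - k) : ℕ) : ℝ) := by
      rw [hcard]
      have h1 : |μ| = Real.sqrt ((k*(n-k):ℕ) : ℝ) := by rw [← hμabs]; exact heq
      calc μ^2 = |μ|^2 := (sq_abs μ).symm
        _ = Real.sqrt ((k*(n-k):ℕ) : ℝ)^2 := by rw [h1]
        _ = ((k*(n-k):ℕ) : ℝ) := Real.sq_sqrt (by positivity)
    obtain ⟨S, T, hpart, hScard, hTcard, hadj2⟩ :=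
      structure_of_equality hk hnV hbip' hfree hμeig hμsq
    rw [hcard] at hTcard
    exact iso_of_partition G S T hpart hScard hTcard hadj2
  · rintro ⟨e⟩
    have heig := eig_completeBipartite G (by omega) (by omega) e
    have hmem : Real.sqrt ((k*(n-k):ℕ) : ℝ) ∈
        {r : ℝ | ∃ μ, IsAdjEigenvalue G μ ∧ r = |μ|} :=
      ⟨_, heig, (abs_of_nonneg (Real.sqrt_nonneg _)).symm⟩
    have hbdd : BddAbove {r : ℝ | ∃ μ, IsAdjEigenvalue G μ ∧ r = |μ|} := ⟨_, hsqle⟩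
    refine le_antisymm hle ?_
    rw [specRad]
    exact le_csSup hbdd hmem
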